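/- arXiv:2310.09100 — 5 statements merged into one kernel-verified Lean document; each statement's English description precedes it below -/
import Mathlib

section
/- A CGF-like function ψ : [0, λ_max) → ℝ≥0 is super-Gaussian if and only if its convex conjugate ψ* is sub-Gaussian, i.e., u ↦ ψ*(u)/u² is non-increasing on the interior of its domain. -/
open Set

def CGFLikeOn (ψ : ℝ → ℝ) (s : Set ℝ) : Prop :=
  s.Nonempty ∧ (∀ x ∈ s, 0 ≤ ψ x) ∧ ContDiffOn ℝ 2 ψ s ∧ StrictConvexOn ℝ s ψ ∧
    ψ 0 = 0 ∧ derivWithin ψ s 0 = 0 ∧ 0 < iteratedDerivWithin 2 ψ s 0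

def CGFLike (ψ : ℝ → ℝ) (lmax : ℝ) : Prop := CGFLikeOn ψ (Ico 0 lmax)

/-- `ψ` is super-Gaussian: `λ ↦ ψ(λ)/λ²` is non-decreasing on `(0, λ_max)`. -/
def SuperGaussian (ψ : ℝ → ℝ) (lmax : ℝ) : Prop :=
  ∀ x ∈ Ioo (0:ℝ) lmax, ∀ y ∈ Ioo (0:ℝ) lmax, x ≤ y → ψ x / x ^ 2 ≤ ψ y / y ^ 2

/-- The convex conjugate `ψ*(u) = sup_{λ ∈ [0, λ_max)} (uλ - ψ(λ))`. -/
noncomputable def psiStar (ψ : ℝ → ℝ) (lmax : ℝ) (u : ℝ) : ℝ :=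
  sSup ((fun l => u * l - ψ l) '' Ico 0 lmax)

/-- The domain `[0, u_max)` of the conjugate, where `u_max = sup_λ ψ'(λ)`. -/
def conjDomain (ψ : ℝ → ℝ) (lmax : ℝ) : Set ℝ :=
  {u : ℝ | 0 ≤ u ∧ ∃ l ∈ Ico (0:ℝ) lmax, u < derivWithin ψ (Ico 0 lmax) l}

section Aux

variable {ψ : ℝ → ℝ} {lmax : ℝ}

/-- Gradient inequality for a convex differentiable function. -/
lemma grad_ineq (hconv : ConvexOn ℝ (Ico 0 lmax) ψ)
    (hdiff : DifferentiableOn ℝ ψ (Ico 0 lmax))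
    {x l : ℝ} (hx : x ∈ Ico (0:ℝ) lmax) (hl : l ∈ Ico (0:ℝ) lmax) :
    ψ x + derivWithin ψ (Ico 0 lmax) x * (l - x) ≤ ψ l := by
  rcases lt_trichotomy x l with hlt | rfl | hlt
  · have h3 := hconv.derivWithin_le_slope hx hl hlt (hdiff x hx)
    rw [slope_def_field] at h3
    have h4 := (le_div_iff₀ (by linarith : (0:ℝ) < l - x)).mp h3
    nlinarith [h4]
  · simp
  · have h3 := hconv.slope_le_derivWithin hl hx hlt (hdiff x hx)
    rw [slope_def_field] at h3
    have h4 := (div_le_iff₀ (by linarith : (0:ℝ) < x - l)).mp h3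
    nlinarith [h4]

/-- The set defining `ψ*(u)` is bounded above as soon as `u ≤ ψ'(l₀)` for some `l₀`. -/
lemma bdd_conj (hconv : ConvexOn ℝ (Ico 0 lmax) ψ)
    (hdiff : DifferentiableOn ℝ ψ (Ico 0 lmax)) {u l0 : ℝ}
    (hl0 : l0 ∈ Ico (0:ℝ) lmax) (hu : u ≤ derivWithin ψ (Ico 0 lmax) l0) :
    BddAbove ((fun l => u * l - ψ l) '' Ico 0 lmax) := by
  refine ⟨derivWithin ψ (Ico 0 lmax) l0 * l0 - ψ l0, ?_⟩
  rintro r ⟨l, hl, rfl⟩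
  have h1 := grad_ineq hconv hdiff hl0 hl
  have h2 : 0 ≤ (derivWithin ψ (Ico 0 lmax) l0 - u) * l :=
    mul_nonneg (sub_nonneg.2 hu) hl.1
  simp only
  nlinarith [h1, h2]

/-- Fenchel equality at the critical point. -/
lemma fenchel_eq (hconv : ConvexOn ℝ (Ico 0 lmax) ψ)
    (hdiff : DifferentiableOn ℝ ψ (Ico 0 lmax)) (hlpos : 0 < lmax)
    {x : ℝ} (hx : x ∈ Ico (0:ℝ) lmax) :
    psiStar ψ lmax (derivWithin ψ (Ico 0 lmax) x)
      = x * derivWithin ψ (Ico 0 lmax) x - ψ x := by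
  simp only [psiStar]
  apply le_antisymm
  · apply csSup_le ((nonempty_Ico.2 hlpos).image _)
    rintro r ⟨l, hl, rfl⟩
    have h1 := grad_ineq hconv hdiff hx hl
    simp only
    nlinarith [h1]
  · exact le_csSup (bdd_conj hconv hdiff hx le_rfl) ⟨x, hx, by ring⟩

end Aux

/-- A CGF-like `ψ` is super-Gaussian iff its convex conjugate `ψ*` is sub-Gaussian, i.e.
`u ↦ ψ*(u)/u²` is non-increasing on the interior of the domain `[0, u_max)` of `ψ*`. -/
theorem superGaussian_iff_conj_subGaussian (ψ : ℝ → ℝ) (lmax : ℝ) (h : CGFLike ψ lmax) :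
    SuperGaussian ψ lmax ↔
      ∀ u ∈ interior (conjDomain ψ lmax), ∀ v ∈ interior (conjDomain ψ lmax),
        u ≤ v → psiStar ψ lmax v / v ^ 2 ≤ psiStar ψ lmax u / u ^ 2 := by
  obtain ⟨hne, hnn, hcd, hsc, h0, hd0, -⟩ := h
  have hlpos : 0 < lmax := by
    obtain ⟨z, hz⟩ := hne
    exact lt_of_le_of_lt hz.1 hz.2
  have hdiff : DifferentiableOn ℝ ψ (Ico 0 lmax) :=
    hcd.differentiableOn (by norm_num)
  have hconv : ConvexOn ℝ (Ico 0 lmax) ψ := hsc.convexOn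
  have hdm : StrictMonoOn (derivWithin ψ (Ico 0 lmax)) (Ico 0 lmax) :=
    hsc.strictMonoOn_derivWithin hdiff
  have h0s : (0:ℝ) ∈ Ico (0:ℝ) lmax := ⟨le_rfl, hlpos⟩
  have hpos : ∀ w ∈ interior (conjDomain ψ lmax), 0 < w := by
    intro w hw
    have h1 : interior (conjDomain ψ lmax) ⊆ interior (Ici (0:ℝ)) :=
      interior_mono (fun z hz => hz.1)
    have h2 := h1 hw
    rwa [interior_Ici, mem_Ioi] at h2
  constructor
  · -- super-Gaussian implies conjugate sub-Gaussian
    intro hsg u hu v hv huv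
    have hu0 : 0 < u := hpos u hu
    have hv0 : 0 < v := hpos v hv
    obtain ⟨-, l0, hl0, hul0⟩ := interior_subset hu
    have hbu : BddAbove ((fun l => u * l - ψ l) '' Ico 0 lmax) :=
      bdd_conj hconv hdiff hl0 hul0.le
    set t : ℝ := u / v with ht
    have ht0 : 0 < t := div_pos hu0 hv0
    have ht1 : t ≤ 1 := div_le_one_of_le₀ huv hv0.le
    have hscale : ∀ l ∈ Ico (0:ℝ) lmax, ψ (t * l) ≤ t ^ 2 * ψ l := by
      intro l hl
      rcases eq_or_lt_of_le hl.1 with hl0' | hl0'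
      · rw [← hl0', mul_zero, h0]
        simp
      · have htll : t * l ≤ l := by nlinarith [mul_nonneg (sub_nonneg.2 ht1) hl0'.le]
        have h1 : t * l ∈ Ioo (0:ℝ) lmax := ⟨mul_pos ht0 hl0', lt_of_le_of_lt htll hl.2⟩
        have h2 : l ∈ Ioo (0:ℝ) lmax := ⟨hl0', hl.2⟩
        have h3 := hsg (t * l) h1 l h2 htll
        rw [div_le_div_iff₀ (by positivity) (by positivity)] at h3
        have hl2 : 0 < l ^ 2 := by positivity
        nlinarith [h3, hl2]
    have hkey : ∀ l ∈ Ico (0:ℝ) lmax,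
        (v * l - ψ l) * u ^ 2 ≤ psiStar ψ lmax u * v ^ 2 := by
      intro l hl
      have htll : t * l ≤ l := by nlinarith [mul_nonneg (sub_nonneg.2 ht1) hl.1]
      have htl : t * l ∈ Ico (0:ℝ) lmax :=
        ⟨mul_nonneg ht0.le hl.1, lt_of_le_of_lt htll hl.2⟩
      have hFY : u * (t * l) - ψ (t * l) ≤ psiStar ψ lmax u := by
        simp only [psiStar]
        exact le_csSup hbu ⟨t * l, htl, rfl⟩
      have hsc' := hscale l hl
      have e1 : (v * l - ψ l) * u ^ 2 = (u * (t * l) - t ^ 2 * ψ l) * v ^ 2 := by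
        rw [ht]
        field_simp
      have e2 : (u * (t * l) - t ^ 2 * ψ l) * v ^ 2 ≤ (u * (t * l) - ψ (t * l)) * v ^ 2 :=
        mul_le_mul_of_nonneg_right (by linarith) (sq_nonneg v)
      have e3 : (u * (t * l) - ψ (t * l)) * v ^ 2 ≤ psiStar ψ lmax u * v ^ 2 :=
        mul_le_mul_of_nonneg_right hFY (sq_nonneg v)
      linarith [e1.le, e2, e3]
    have hmain : psiStar ψ lmax v ≤ psiStar ψ lmax u * v ^ 2 / u ^ 2 := by
      simp only [psiStar]
      apply csSup_le ((nonempty_Ico.2 hlpos).image _)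
      rintro r ⟨l, hl, rfl⟩
      rw [le_div_iff₀ (by positivity : (0:ℝ) < u ^ 2)]
      exact hkey l hl
    rw [div_le_div_iff₀ (by positivity) (by positivity)]
    calc psiStar ψ lmax v * u ^ 2
        ≤ (psiStar ψ lmax u * v ^ 2 / u ^ 2) * u ^ 2 :=
          mul_le_mul_of_nonneg_right hmain (by positivity)
      _ = psiStar ψ lmax u * v ^ 2 := by field_simp
  · -- conjugate sub-Gaussian implies super-Gaussian
    intro hsub
    have hkey : ∀ l ∈ Ioo (0:ℝ) lmax, 2 * ψ l ≤ l * derivWithin ψ (Ico 0 lmax) l := by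
      intro l hl
      have hls : l ∈ Ico (0:ℝ) lmax := ⟨hl.1.le, hl.2⟩
      set u : ℝ := derivWithin ψ (Ico 0 lmax) l with hu
      have hu0 : 0 < u := by
        have := hdm h0s hls hl.1
        rwa [hd0] at this
      set l1 : ℝ := (l + lmax) / 2 with hl1
      have hl1s : l1 ∈ Ico (0:ℝ) lmax := ⟨by nlinarith [hl.1], by nlinarith [hl.2]⟩
      set c : ℝ := derivWithin ψ (Ico 0 lmax) l1 with hc
      have huc : u < c := hdm hls hl1s (by nlinarith [hl.2])
      have hIoo_sub : Ioo (0:ℝ) c ⊆ interior (conjDomain ψ lmax) :=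
        interior_maximal (fun w hw => ⟨hw.1.le, l1, hl1s, hw.2⟩) isOpen_Ioo
      have hu_mem : u ∈ interior (conjDomain ψ lmax) := hIoo_sub ⟨hu0, huc⟩
      have hphiu : psiStar ψ lmax u = l * u - ψ l := fenchel_eq hconv hdiff hlpos hls
      have hM : 0 ≤ l * u - ψ l := by
        have := grad_ineq hconv hdiff hls h0s
        rw [h0] at this
        nlinarith [this]
      have hstep : ∀ hh, hh ∈ Ioo (0:ℝ) (c - u) →
          l * u ^ 2 ≤ (2 * u + hh) * (l * u - ψ l) := by
        intro hh hhh
        set v : ℝ := u + hh with hv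
        have hv0 : 0 < v := by have := hhh.1; positivity
        have hv_mem : v ∈ interior (conjDomain ψ lmax) :=
          hIoo_sub ⟨hv0, by have := hhh.2; simp only [hv]; linarith⟩
        have hsub' := hsub u hu_mem v hv_mem (by have := hhh.1; linarith)
        rw [div_le_div_iff₀ (by positivity) (by positivity)] at hsub'
        have hFY : v * l - ψ l ≤ psiStar ψ lmax v := by
          simp only [psiStar]
          refine le_csSup (bdd_conj hconv hdiff hl1s ?_) ⟨l, hls, rfl⟩
          have := hhh.2
          simp only [hv, ← hc]
          linarith
        have H : (v * l - ψ l) * u ^ 2 ≤ (l * u - ψ l) * v ^ 2 := by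
          calc (v * l - ψ l) * u ^ 2 ≤ psiStar ψ lmax v * u ^ 2 :=
                mul_le_mul_of_nonneg_right hFY (sq_nonneg u)
            _ ≤ psiStar ψ lmax u * v ^ 2 := hsub'
            _ = (l * u - ψ l) * v ^ 2 := by rw [hphiu]
        rw [hv] at H
        have hhh1 := hhh.1
        nlinarith [H, hhh1]
      have hfinal : l * u ^ 2 ≤ 2 * u * (l * u - ψ l) := by
        refine le_of_forall_pos_le_add fun ε hε => ?_
        set hh : ℝ := min ((c - u) / 2) (ε / (l * u - ψ l + 1)) with hhdef
        have hh0 : 0 < hh := lt_min (by linarith) (div_pos hε (by linarith))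
        have hhc : hh < c - u := lt_of_le_of_lt (min_le_left _ _) (by linarith)
        have h1 := hstep hh ⟨hh0, hhc⟩
        have h2 : hh * (l * u - ψ l) ≤ ε := by
          calc hh * (l * u - ψ l) ≤ (ε / (l * u - ψ l + 1)) * (l * u - ψ l) :=
                mul_le_mul_of_nonneg_right (min_le_right _ _) hM
            _ ≤ ε := by
                rw [div_mul_eq_mul_div, div_le_iff₀ (by linarith)]
                nlinarith [hε.le, hM]
        nlinarith [h1, h2]
      nlinarith [hfinal, hu0]
    have hmono : MonotoneOn (fun z => ψ z / z ^ 2) (Ioo (0:ℝ) lmax) := by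
      have hder : ∀ z ∈ Ioo (0:ℝ) lmax, HasDerivWithinAt (fun w => ψ w / w ^ 2)
          ((derivWithin ψ (Ico 0 lmax) z * z ^ 2 - ψ z * (2 * z)) / (z ^ 2) ^ 2)
          (Ioo (0:ℝ) lmax) z := by
        intro z hz
        have hzs : z ∈ Ico (0:ℝ) lmax := ⟨hz.1.le, hz.2⟩
        have h1 : HasDerivWithinAt ψ (derivWithin ψ (Ico 0 lmax) z) (Ioo (0:ℝ) lmax) z :=
          ((hdiff z hzs).hasDerivWithinAt).mono Ioo_subset_Ico_self
        have h2 : HasDerivWithinAt (fun w : ℝ => w ^ 2) (2 * z) (Ioo (0:ℝ) lmax) z := by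
          simpa using (hasDerivAt_pow 2 z).hasDerivWithinAt
        exact h1.div h2 (pow_ne_zero _ (ne_of_gt hz.1))
      refine monotoneOn_of_hasDerivWithinAt_nonneg (convex_Ioo _ _)
        (fun z hz => (hder z hz).continuousWithinAt)
        (f' := fun z => (derivWithin ψ (Ico 0 lmax) z * z ^ 2 - ψ z * (2 * z)) / (z ^ 2) ^ 2)
        ?_ ?_
      · intro z hz
        rw [isOpen_Ioo.interior_eq] at hz
        exact (hder z hz).mono interior_subset
      · intro z hz
        rw [isOpen_Ioo.interior_eq] at hz
        apply div_nonneg _ (by positivity)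
        nlinarith [mul_nonneg hz.1.le
          (by linarith [hkey z hz] : (0:ℝ) ≤ z * derivWithin ψ (Ico 0 lmax) z - 2 * ψ z)]
    intro x hx y hy hxy
    exact hmono hx hy hxy
end

section
/- For the sub-Gamma CGF-like function ψ_{G,c}(λ) = λ²/(2(1 - cλ)) defined on [0, 1/c) with c > 0, the inverse of the convex conjugate is (ψ_{G,c}*)^{-1}(x) = √(2x) + cx for all x ≥ 0. -/
open Set

lemma psiStar_subGamma_eq (c : ℝ) (hc : 0 < c) (u : ℝ) (hu : 0 ≤ u) :
    psiStar (fun l => l ^ 2 / (2 * (1 - c * l))) (1 / c) u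
      = (Real.sqrt (1 + 2 * c * u) - 1) ^ 2 / (2 * c ^ 2) := by
  have harg : (0:ℝ) ≤ 1 + 2 * c * u := by nlinarith
  set t := Real.sqrt (1 + 2 * c * u) with ht
  have ht2 : t ^ 2 = 1 + 2 * c * u := Real.sq_sqrt harg
  have ht1 : 1 ≤ t := by nlinarith [Real.sqrt_nonneg (1 + 2 * c * u)]
  have htpos : (0:ℝ) < t := lt_of_lt_of_le one_pos ht1
  have hu' : u = (t ^ 2 - 1) / (2 * c) := by rw [ht2]; field_simp; ring
  apply IsGreatest.csSup_eq
  constructor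
  · refine ⟨(t - 1) / (c * t), ⟨div_nonneg (by linarith) (by positivity), ?_⟩, ?_⟩
    · rw [div_lt_div_iff₀ (by positivity) hc]
      nlinarith
    · have h1 : 1 - c * ((t - 1) / (c * t)) = 1 / t := by
        field_simp
        ring
      show u * ((t - 1) / (c * t)) - ((t - 1) / (c * t)) ^ 2 / (2 * (1 - c * ((t - 1) / (c * t))))
          = (t - 1) ^ 2 / (2 * c ^ 2)
      rw [hu', h1]
      field_simp
      ring
  · rintro y ⟨l, ⟨hl0, hl1⟩, rfl⟩
    have hcl : 0 < 1 - c * l := by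
      rw [lt_div_iff₀ hc] at hl1; linarith
    have e : (t - 1) ^ 2 / (2 * c ^ 2) - (u * l - l ^ 2 / (2 * (1 - c * l)))
        = (c * l * t - (t - 1)) ^ 2 / (2 * c ^ 2 * (1 - c * l)) := by
      rw [hu']
      field_simp
      ring
    have hpos : (0:ℝ) ≤ (c * l * t - (t - 1)) ^ 2 / (2 * c ^ 2 * (1 - c * l)) := by positivity
    rw [← e] at hpos
    show u * l - l ^ 2 / (2 * (1 - c * l)) ≤ (t - 1) ^ 2 / (2 * c ^ 2)
    linarith

/-- For the sub-Gamma CGF-like function `ψ_{G,c}(λ) = λ²/(2(1 - cλ))` on `[0, 1/c)` with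
`c > 0`, the inverse of the convex conjugate (the set-inverse of the strictly increasing
conjugate on `[0, ∞)`) is `(ψ_{G,c}*)⁻¹(x) = √(2x) + cx` for all `x ≥ 0`. -/
theorem subGamma_conj_inv (c : ℝ) (hc : 0 < c) (x : ℝ) (hx : 0 ≤ x) :
    Function.invFunOn (psiStar (fun l => l ^ 2 / (2 * (1 - c * l))) (1 / c)) (Ici 0) x
      = Real.sqrt (2 * x) + c * x := by
  set f := psiStar (fun l => l ^ 2 / (2 * (1 - c * l))) (1 / c) with hf
  have hinj : Set.InjOn f (Ici 0) := by
    intro a ha b hb hab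
    have ha' : (0:ℝ) ≤ a := ha
    have hb' : (0:ℝ) ≤ b := hb
    rw [hf, psiStar_subGamma_eq c hc a ha', psiStar_subGamma_eq c hc b hb'] at hab
    have hsa : (0:ℝ) ≤ 1 + 2 * c * a := by nlinarith
    have hsb : (0:ℝ) ≤ 1 + 2 * c * b := by nlinarith
    have h1a : 1 ≤ Real.sqrt (1 + 2 * c * a) := by
      have := Real.sqrt_le_sqrt (show (1:ℝ) ≤ 1 + 2 * c * a by nlinarith)
      simpa using this
    have h1b : 1 ≤ Real.sqrt (1 + 2 * c * b) := by
      have := Real.sqrt_le_sqrt (show (1:ℝ) ≤ 1 + 2 * c * b by nlinarith)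
      simpa using this
    have heq : Real.sqrt (1 + 2 * c * a) = Real.sqrt (1 + 2 * c * b) := by
      have h2 : (Real.sqrt (1 + 2 * c * a) - 1) ^ 2 = (Real.sqrt (1 + 2 * c * b) - 1) ^ 2 := by
        field_simp at hab
        nlinarith [hab]
      nlinarith [h2]
    have := congrArg (· ^ 2) heq
    simp only [Real.sq_sqrt hsa, Real.sq_sqrt hsb] at this
    nlinarith [this]
  set u₀ := Real.sqrt (2 * x) + c * x with hu₀
  have hsx : Real.sqrt (2 * x) ^ 2 = 2 * x := Real.sq_sqrt (by linarith)
  have hsxn : 0 ≤ Real.sqrt (2 * x) := Real.sqrt_nonneg _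
  have hu0mem : u₀ ∈ Ici (0:ℝ) := by
    simp only [mem_Ici, hu₀]; positivity
  have hfu : f u₀ = x := by
    rw [hf, psiStar_subGamma_eq c hc u₀ hu0mem]
    have h1 : 1 + 2 * c * u₀ = (1 + c * Real.sqrt (2 * x)) ^ 2 := by
      rw [hu₀]; linear_combination (-c^2) * hsx
    rw [h1, Real.sqrt_sq (by positivity)]
    have h2 : (1 + c * Real.sqrt (2 * x) - 1) ^ 2 = c ^ 2 * (2 * x) := by
      rw [show 1 + c * Real.sqrt (2 * x) - 1 = c * Real.sqrt (2 * x) by ring, mul_pow, hsx]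
    rw [h2]
    field_simp
  calc Function.invFunOn f (Ici 0) x = Function.invFunOn f (Ici 0) (f u₀) := by rw [hfu]
    _ = u₀ := hinj.leftInvOn_invFunOn hu0mem
end

section
/- For any α > 1, one has ((α^{1/4} + α^{-1/4})/√2)² ≤ 2α; moreover, for 1 < α < 2.06, one has 2α ≤ 2·((α^{1/4} + α^{-1/4})/√2)². -/
/-- For any `α > 1`, `((α^{1/4} + α^{-1/4})/√2)² ≤ 2α`; moreover, for `1 < α < 2.06`,
`2α ≤ 2·((α^{1/4} + α^{-1/4})/√2)²`. -/
theorem stitching_constants (α : ℝ) (hα : 1 < α) :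
    ((α ^ ((1:ℝ)/4) + α ^ (-(1:ℝ)/4)) / Real.sqrt 2) ^ 2 ≤ 2 * α ∧
      (α < 2.06 →
        2 * α ≤ 2 * ((α ^ ((1:ℝ)/4) + α ^ (-(1:ℝ)/4)) / Real.sqrt 2) ^ 2) := by
  have hα0 : (0:ℝ) < α := lt_trans one_pos hα
  set t : ℝ := α ^ ((1:ℝ)/4) with htdef
  have ht1 : 1 < t := (Real.one_lt_rpow_iff_of_pos hα0).2 (Or.inl ⟨hα, by norm_num⟩)
  have ht0 : 0 < t := lt_trans one_pos ht1
  have htα : t ^ 4 = α := by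
    rw [htdef, ← Real.rpow_natCast (α ^ ((1:ℝ)/4)) 4, ← Real.rpow_mul hα0.le]
    norm_num
  have hneg : α ^ (-(1:ℝ)/4) = t⁻¹ := by
    rw [neg_div, Real.rpow_neg hα0.le]
  have hs2 : Real.sqrt 2 ^ 2 = 2 := Real.sq_sqrt (by norm_num)
  have hexp : ((t + t⁻¹) / Real.sqrt 2) ^ 2 = (t + t⁻¹) ^ 2 / 2 := by
    rw [div_pow, hs2]
  have h : (t + t⁻¹)^2 = (t^2 + 1)^2 / t^2 := by field_simp
  have hu1 : 1 < t^2 := one_lt_pow₀ ht1 two_ne_zero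
  rw [hneg, hexp, ← htα]
  constructor
  · rw [div_le_iff₀ (by norm_num), h, div_le_iff₀ (by positivity)]
    nlinarith [sq_nonneg (t^2 - 1), sq_nonneg t, pow_pos ht0 2]
  · intro hα2
    rw [h]
    rw [div_div, ← mul_div_assoc, le_div_iff₀ (by positivity)]
    have h2 : (t^2)^2 < 2.06 := by nlinarith
    nlinarith [mul_pos (sub_pos.2 hu1) (sub_pos.2 h2), sq_nonneg (t^2 - 1.06), sq_nonneg (t^2-1), sq_nonneg ((t^2)^2 - 2.06)]
end

section
/- Let T be a symmetric positive-definite d×d matrix with condition number κ = γ_max(T)/γ_min(T). Let K be a proper ε-cover of the unit sphere S^{d-1} with projection map π : S^{d-1} → K satisfying ‖x - π(x)‖ ≤ ε for all x. For ν ∈ S^{d-1}, let ω be the unique unit vector with ν = T^{1/2}ω / ‖T^{1/2}ω‖, and set π_T(ν) := T^{1/2}π(ω) / ‖T^{1/2}π(ω)‖. Then ‖ν - π_T(ν)‖ ≤ √κ · ε. -/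
open Set Matrix

/-- The square root of a positive semidefinite matrix, as defined in the older Mathlib
(removed from the current one). -/
noncomputable def Matrix.PosSemidef.sqrt {n 𝕜 : Type*} [Fintype n] [RCLike 𝕜] [PartialOrder 𝕜]
    [StarOrderedRing 𝕜] [DecidableEq n]
    {A : Matrix n n 𝕜} (hA : A.PosSemidef) : Matrix n n 𝕜 :=
  hA.1.eigenvectorUnitary.1 * diagonal ((↑) ∘ (√·) ∘ hA.1.eigenvalues) *
    (star hA.1.eigenvectorUnitary : Matrix n n 𝕜)

/-- Euclidean norm of a vector in `ℝ^d`. -/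
noncomputable def enorm2 {d : ℕ} (v : Fin d → ℝ) : ℝ := Real.sqrt (∑ i, v i ^ 2)

lemma enorm2_eq_sqrt_dot {d : ℕ} (v : Fin d → ℝ) :
    enorm2 v = Real.sqrt (v ⬝ᵥ v) := by
  simp [enorm2, dotProduct, pow_two]

lemma enorm2_sq {d : ℕ} (v : Fin d → ℝ) : enorm2 v ^ 2 = v ⬝ᵥ v := by
  rw [enorm2_eq_sqrt_dot, Real.sq_sqrt]
  exact Finset.sum_nonneg fun i _ => mul_self_nonneg _

lemma enorm2_nonneg {d : ℕ} (v : Fin d → ℝ) : 0 ≤ enorm2 v := Real.sqrt_nonneg _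

lemma psd_sqrt_transpose_real {d : ℕ} {T : Matrix (Fin d) (Fin d) ℝ} (hT : T.PosSemidef) :
    hT.sqrt.transpose = hT.sqrt := by
  rw [← conjTranspose_eq_transpose_of_trivial]
  simp only [Matrix.PosSemidef.sqrt, conjTranspose_mul, diagonal_conjTranspose]
  simp [Matrix.mul_assoc, Matrix.star_eq_conjTranspose]

lemma psd_sqrt_mul_self_real {d : ℕ} {T : Matrix (Fin d) (Fin d) ℝ} (hT : T.PosSemidef) :
    hT.sqrt * hT.sqrt = T := by
  conv_rhs => rw [hT.1.spectral_theorem, Unitary.conjStarAlgAut_apply]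
  simp only [Matrix.PosSemidef.sqrt]
  have hU := Unitary.coe_star_mul_self hT.1.eigenvectorUnitary
  rw [show ∀ A B C D E F : Matrix (Fin d) (Fin d) ℝ, A * B * C * (D * E * F) = A * B * (C * D) * E * F
    from fun A B C D E F => by simp only [Matrix.mul_assoc], hU, Matrix.mul_one, Matrix.mul_assoc _ (diagonal _) (diagonal _), diagonal_mul_diagonal]
  congr 3
  funext i
  simp [Real.mul_self_sqrt (hT.eigenvalues_nonneg i)]

set_option maxHeartbeats 1000000 in
/-- Lemma on covers distorted by a positive-definite matrix: if `K` is a proper `ε`-cover of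
the unit sphere with projection `π`, `T` is positive definite with `γ_min ‖v‖² ≤ vᵀTv ≤
γ_max ‖v‖²` (so condition number `κ = γ_max/γ_min`), `ν = T^{1/2}ω/‖T^{1/2}ω‖`, and
`π_T(ν) = T^{1/2}π(ω)/‖T^{1/2}π(ω)‖`, then `‖ν - π_T(ν)‖ ≤ √κ ε`. -/
theorem cover_distortion {d : ℕ} (T : Matrix (Fin d) (Fin d) ℝ) (hT : T.PosDef)
    (γmax γmin : ℝ) (hγmin : 0 < γmin)
    (hmax : ∀ v : Fin d → ℝ, v ⬝ᵥ T.mulVec v ≤ γmax * enorm2 v ^ 2)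
    (hmin : ∀ v : Fin d → ℝ, γmin * enorm2 v ^ 2 ≤ v ⬝ᵥ T.mulVec v)
    (ε : ℝ) (hε : 0 < ε)
    (K : Set (Fin d → ℝ)) (hK : K ⊆ {x | enorm2 x = 1})
    (π : (Fin d → ℝ) → (Fin d → ℝ))
    (hπ : ∀ x : Fin d → ℝ, enorm2 x = 1 → π x ∈ K ∧ enorm2 (x - π x) ≤ ε)
    (ν ω : Fin d → ℝ) (hω : enorm2 ω = 1)
    (hν : ν = (enorm2 (hT.posSemidef.sqrt.mulVec ω))⁻¹ • hT.posSemidef.sqrt.mulVec ω) :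
    enorm2 (ν - (enorm2 (hT.posSemidef.sqrt.mulVec (π ω)))⁻¹ •
        hT.posSemidef.sqrt.mulVec (π ω))
      ≤ Real.sqrt (γmax / γmin) * ε := by
  set S := hT.posSemidef.sqrt with hS
  have hSsymm : Sᵀ = S := by
    exact psd_sqrt_transpose_real hT.posSemidef
  have key : ∀ x y : Fin d → ℝ, (S.mulVec x) ⬝ᵥ (S.mulVec y) = x ⬝ᵥ T.mulVec y := by
    intro x y
    have hTS : x ⬝ᵥ T.mulVec y = x ⬝ᵥ (S * S).mulVec y := by
      rw [hS, psd_sqrt_mul_self_real hT.posSemidef]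
    rw [hTS, ← Matrix.mulVec_mulVec, Matrix.dotProduct_mulVec x S,
      ← Matrix.mulVec_transpose, hSsymm]
  set a := S.mulVec ω with ha
  set b := S.mulVec (π ω) with hb
  obtain ⟨hπK, hπε⟩ := hπ ω hω
  have hπ1 : enorm2 (π ω) = 1 := hK hπK
  -- squared norms
  have haa : a ⬝ᵥ a = ω ⬝ᵥ T.mulVec ω := key ω ω
  have hbb : b ⬝ᵥ b = (π ω) ⬝ᵥ T.mulVec (π ω) := key (π ω) (π ω)
  have haa_ge : γmin ≤ a ⬝ᵥ a := by
    have := hmin ω; rw [hω] at this; simpa [haa] using this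
  have hbb_ge : γmin ≤ b ⬝ᵥ b := by
    have := hmin (π ω); rw [hπ1] at this; simpa [hbb] using this
  have hγmax : γmin ≤ γmax := by
    have h1 := hmin ω; have h2 := hmax ω
    rw [hω] at h1 h2; nlinarith
  set na := enorm2 a with hna
  set nb := enorm2 b with hnb
  have hna2 : na ^ 2 = a ⬝ᵥ a := enorm2_sq a
  have hnb2 : nb ^ 2 = b ⬝ᵥ b := enorm2_sq b
  have hna_nonneg : 0 ≤ na := hna ▸ enorm2_nonneg a
  have hnb_nonneg : 0 ≤ nb := hnb ▸ enorm2_nonneg b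
  have hna_pos : 0 < na := by nlinarith
  have hnb_pos : 0 < nb := by nlinarith
  -- bound on ‖a - b‖²
  have hdiff : (a - b) ⬝ᵥ (a - b) ≤ γmax * ε ^ 2 := by
    have hab : a - b = S.mulVec (ω - π ω) := by rw [ha, hb, Matrix.mulVec_sub]
    rw [hab, key]
    calc (ω - π ω) ⬝ᵥ T.mulVec (ω - π ω) ≤ γmax * enorm2 (ω - π ω) ^ 2 := hmax _
      _ ≤ γmax * ε ^ 2 := by
          apply mul_le_mul_of_nonneg_left _ (le_trans hγmin.le hγmax)
          exact pow_le_pow_left₀ (enorm2_nonneg _) hπε 2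
  -- the target vector
  set v := na⁻¹ • a - nb⁻¹ • b with hv
  have hvv : v ⬝ᵥ v = 2 - 2 * (a ⬝ᵥ b) / (na * nb) := by
    have e1 : v ⬝ᵥ v = na⁻¹ * na⁻¹ * (a ⬝ᵥ a) + nb⁻¹ * nb⁻¹ * (b ⬝ᵥ b)
        - 2 * (na⁻¹ * nb⁻¹ * (a ⬝ᵥ b)) := by
      simp only [hv, sub_dotProduct, dotProduct_sub,
        smul_dotProduct, dotProduct_smul, smul_eq_mul]
      rw [dotProduct_comm b a]; ring
    rw [e1, ← hna2, ← hnb2]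
    field_simp
    ring
  have hvv_nonneg : 0 ≤ v ⬝ᵥ v := by
    rw [← enorm2_sq]; positivity
  have hexp : (a - b) ⬝ᵥ (a - b) = a ⬝ᵥ a + b ⬝ᵥ b - 2 * (a ⬝ᵥ b) := by
    simp only [sub_dotProduct, dotProduct_sub]
    rw [dotProduct_comm b a]; ring
  have hp : γmin ≤ na * nb := by nlinarith
  have hvkey : v ⬝ᵥ v ≤ γmax * ε ^ 2 / γmin := by
    have h2 : v ⬝ᵥ v = (2 * (na * nb) - 2 * (a ⬝ᵥ b)) / (na * nb) := by
      rw [hvv]; field_simp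
    have hnum : 2 * (na * nb) - 2 * (a ⬝ᵥ b) ≤ γmax * ε ^ 2 := by
      nlinarith [sq_nonneg (na - nb)]
    rw [h2]
    have hpp : 0 < na * nb := mul_pos hna_pos hnb_pos
    have hnum_nonneg : 0 ≤ 2 * (na * nb) - 2 * (a ⬝ᵥ b) := by
      have h3 := hvv_nonneg
      rw [h2] at h3
      rcases div_nonneg_iff.mp h3 with h4 | h4
      · exact h4.1
      · linarith [h4.2]
    exact div_le_div₀ (mul_nonneg (le_trans hγmin.le hγmax) (sq_nonneg ε)) hnum hγmin hp
  -- conclude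
  have hgoal : enorm2 v ≤ Real.sqrt (γmax / γmin) * ε := by
    rw [enorm2_eq_sqrt_dot]
    calc Real.sqrt (v ⬝ᵥ v) ≤ Real.sqrt (γmax / γmin * ε ^ 2) := by
          apply Real.sqrt_le_sqrt
          rw [div_mul_eq_mul_div]; exact hvkey
      _ = Real.sqrt (γmax / γmin) * ε := by
          rw [Real.sqrt_mul (div_nonneg (le_trans hγmin.le hγmax) hγmin.le), Real.sqrt_sq hε.le]
  rw [hν]
  exact hgoal
end

section
/- Let (X_t)_{t≥1} be real random variables adapted to a filtration with |X_t| ≤ 1/2 almost surely, and let μ̂_t := (1/t)Σ_{s≤t}X_s (with μ̂_0 := 0). Then for any λ ∈ [0, 1), the process L_t^λ := exp{λ Σ_{s≤t}(X_s − E_{s-1}X_s) − ψ_{E,1}(λ) Σ_{s≤t}(X_s − μ̂_{s-1})²} is a nonnegative supermartingale, where ψ_{E,1}(λ) = −log(1−λ) − λ. -/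
open Set MeasureTheory Finset

/-- Running sample mean `μ̂_t = (1/t) Σ_{s ≤ t} X_s`, with `μ̂_0 = 0`. -/
noncomputable def sampleMean {Ω : Type*} (X : ℕ → Ω → ℝ) (t : ℕ) (ω : Ω) : ℝ :=
  if t = 0 then 0 else (t : ℝ)⁻¹ * ∑ s ∈ Icc 1 t, X s ω

lemma log_lower_bound {l : ℝ} (h0 : 0 ≤ l) (h1 : l < 1) :
    l + l ^ 2 / 2 ≤ -Real.log (1 - l) := by
  set g : ℝ → ℝ := fun x => -Real.log (1 - x) - x - x ^ 2 / 2 with hg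
  have key : ∀ x ∈ Icc (0:ℝ) l, x < 1 := fun x hx => lt_of_le_of_lt hx.2 h1
  have hder : ∀ x : ℝ, x < 1 → HasDerivAt g (1 / (1 - x) - 1 - x) x := by
    intro x hx
    have hne : (1 : ℝ) - x ≠ 0 := by linarith
    have h1x : HasDerivAt (fun x : ℝ => 1 - x) (-1) x := by
      simpa using (hasDerivAt_id x).const_sub 1
    have hlog : HasDerivAt (fun x : ℝ => Real.log (1 - x)) ((1 - x)⁻¹ * (-1)) x :=
      (Real.hasDerivAt_log hne).comp x h1x
    have hp : HasDerivAt (fun x : ℝ => x ^ 2 / 2) x x := by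
      simpa using (hasDerivAt_pow 2 x).div_const 2
    have := (hlog.neg.sub (hasDerivAt_id x)).sub hp
    exact this.congr_deriv (by ring)
  have hmono : MonotoneOn g (Icc 0 l) := by
    apply monotoneOn_of_deriv_nonneg (convex_Icc 0 l)
    · intro x hx
      exact (hder x (key x hx)).continuousAt.continuousWithinAt
    · intro x hx
      have hx' := interior_subset hx
      exact ((hder x (key x hx')).differentiableAt).differentiableWithinAt
    · intro x hx
      rw [interior_Icc] at hx
      have hx1 : x < 1 := lt_trans hx.2 h1
      rw [(hder x hx1).deriv]
      have hpos : (0:ℝ) < 1 - x := by linarith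
      rw [div_sub' (ne_of_gt hpos), div_sub' (ne_of_gt hpos)]
      apply div_nonneg _ hpos.le
      nlinarith [sq_nonneg x, hx.1.le]
  have h0g : g 0 = 0 := by simp [hg]
  have := hmono (Set.mem_Icc.2 ⟨le_refl 0, h0⟩) (Set.mem_Icc.2 ⟨h0, le_refl l⟩) h0
  rw [h0g] at this
  simp only [hg] at this
  linarith

lemma fgl_ineq {l y : ℝ} (h0 : 0 ≤ l) (h1 : l < 1) (hy : -1 ≤ y) :
    Real.exp (l * y - (-Real.log (1 - l) - l) * y ^ 2) ≤ 1 + l * y := by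
  rcases eq_or_lt_of_le h0 with rfl | hl
  · simp
  set ψ : ℝ := -Real.log (1 - l) - l with hψ
  have hpos : ∀ x : ℝ, -1 ≤ x → 0 < 1 + l * x := by
    intro x hx; nlinarith
  have h2ψ : l ^ 2 ≤ 2 * ψ := by
    have := log_lower_bound h0 h1
    simp only [hψ]; linarith
  set F : ℝ → ℝ := fun x => ψ * x ^ 2 - l * x + Real.log (1 + l * x) with hF
  -- derivative of F
  have hder : ∀ x : ℝ, -1 ≤ x →
      HasDerivAt F (x * (2 * ψ - l ^ 2 / (1 + l * x))) x := by
    intro x hx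
    have hne : (1 : ℝ) + l * x ≠ 0 := ne_of_gt (hpos x hx)
    have h1x : HasDerivAt (fun x : ℝ => 1 + l * x) l x := by
      simpa using ((hasDerivAt_id x).const_mul l).const_add 1
    have hlog : HasDerivAt (fun x : ℝ => Real.log (1 + l * x)) ((1 + l * x)⁻¹ * l) x :=
      by have := (Real.hasDerivAt_log hne).comp x h1x; exact this
    have hp : HasDerivAt (fun x : ℝ => ψ * x ^ 2) (ψ * (2 * x)) x := by
      simpa using (hasDerivAt_pow 2 x).const_mul ψ
    have := (hp.sub ((hasDerivAt_id x).const_mul l)).add hlog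
    exact this.congr_deriv (by rw [div_eq_mul_inv]; have h := mul_inv_cancel₀ hne; linear_combination l * h)
  have hFcont : ∀ x : ℝ, -1 ≤ x → ContinuousAt F x :=
    fun x hx => (hder x hx).continuousAt
  have hF0 : F 0 = 0 := by simp [hF]
  have hFm1 : F (-1) = 0 := by
    have : (1 : ℝ) + l * (-1) = 1 - l := by ring
    simp [hF, this, hψ]; ring
  -- main claim : 0 ≤ F y
  have hmain : 0 ≤ F y := by
    rcases le_or_gt 0 y with hy0 | hy0
    · -- monotone on [0, y]
      have hmono : MonotoneOn F (Icc 0 y) := by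
        apply monotoneOn_of_deriv_nonneg (convex_Icc 0 y)
        · exact fun x hx => (hFcont x (by linarith [hx.1])).continuousWithinAt
        · intro x hx
          have hx' := interior_subset hx
          exact ((hder x (by linarith [hx'.1])).differentiableAt).differentiableWithinAt
        · intro x hx
          rw [interior_Icc] at hx
          rw [(hder x (by linarith [hx.1.le])).deriv]
          have hxpos : 0 < 1 + l * x := hpos x (by linarith [hx.1.le])
          have : l ^ 2 / (1 + l * x) ≤ l ^ 2 := by
            rw [div_le_iff₀ hxpos]
            nlinarith [mul_nonneg (sq_nonneg l) (mul_nonneg h0 hx.1.le)]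
          have h2 : 0 ≤ 2 * ψ - l ^ 2 / (1 + l * x) := by linarith
          exact mul_nonneg hx.1.le h2
      rcases eq_or_lt_of_le hy0 with rfl | hy0'
      · rw [hF0]
      · have := hmono (Set.mem_Icc.2 ⟨le_refl 0, hy0⟩) (Set.mem_Icc.2 ⟨hy0, le_refl y⟩) hy0
        rw [hF0] at this; exact this
    · -- y < 0 case
      set Q : ℝ → ℝ := fun x => 2 * ψ - l ^ 2 / (1 + l * x) with hQ
      have hQmono : ∀ x₁ x₂ : ℝ, -1 ≤ x₁ → x₁ ≤ x₂ → Q x₁ ≤ Q x₂ := by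
        intro x₁ x₂ hx₁ hx₁₂
        have p1 : 0 < 1 + l * x₁ := hpos x₁ hx₁
        have p2 : 0 < 1 + l * x₂ := hpos x₂ (by linarith)
        have : l ^ 2 / (1 + l * x₂) ≤ l ^ 2 / (1 + l * x₁) := by
          apply div_le_div_of_nonneg_left (sq_nonneg l) p1
          nlinarith
        simp only [hQ]; linarith
      rcases le_or_gt 0 (Q y) with hQy | hQy
      · -- antitone on [y, 0]
        have hanti : AntitoneOn F (Icc y 0) := by
          apply antitoneOn_of_deriv_nonpos (convex_Icc y 0)
          · exact fun x hx => (hFcont x (by linarith [hx.1])).continuousWithinAt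
          · intro x hx
            have hx' := interior_subset hx
            exact ((hder x (by linarith [hx'.1])).differentiableAt).differentiableWithinAt
          · intro x hx
            rw [interior_Icc] at hx
            rw [(hder x (by linarith [hx.1.le])).deriv]
            have hQx : 0 ≤ Q x := le_trans hQy (hQmono y x hy hx.1.le)
            simp only [hQ] at hQx
            exact mul_nonpos_of_nonpos_of_nonneg hx.2.le hQx
        have := hanti (Set.mem_Icc.2 ⟨le_refl y, hy0.le⟩) (Set.mem_Icc.2 ⟨hy0.le, le_refl 0⟩) hy0.le
        rw [hF0] at this; exact this
      · -- monotone on [-1, y]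
        have hmono : MonotoneOn F (Icc (-1) y) := by
          apply monotoneOn_of_deriv_nonneg (convex_Icc (-1) y)
          · exact fun x hx => (hFcont x hx.1).continuousWithinAt
          · intro x hx
            have hx' := interior_subset hx
            exact ((hder x hx'.1).differentiableAt).differentiableWithinAt
          · intro x hx
            rw [interior_Icc] at hx
            rw [(hder x hx.1.le).deriv]
            have hQx : Q x ≤ 0 := le_trans (hQmono x y hx.1.le hx.2.le) hQy.le
            have hxneg : x ≤ 0 := by linarith [hx.2]
            simp only [hQ] at hQx
            nlinarith
        have := hmono (Set.mem_Icc.2 ⟨le_refl (-1), hy⟩) (Set.mem_Icc.2 ⟨hy, le_refl y⟩) hy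
        rw [hFm1] at this; exact this
  -- conclude
  have hexp : l * y - ψ * y ^ 2 ≤ Real.log (1 + l * y) := by
    simp only [hF] at hmain; linarith
  calc Real.exp (l * y - ψ * y ^ 2) ≤ Real.exp (Real.log (1 + l * y)) :=
        Real.exp_le_exp.2 hexp
    _ = 1 + l * y := Real.exp_log (hpos y hy)

/-- Fan–Grama–Liu / empirical Bernstein supermartingale: if `|X_t| ≤ 1/2` a.s., then for
any `λ ∈ [0, 1)`,
`L_t^λ = exp(λ Σ_{s≤t}(X_s − E_{s-1}X_s) − ψ_{E,1}(λ) Σ_{s≤t}(X_s − μ̂_{s-1})²)`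
is a nonnegative supermartingale, where `ψ_{E,1}(λ) = −log(1−λ) − λ`. -/
theorem empirical_bernstein_supermartingale {Ω : Type*} {m : MeasurableSpace Ω}
    (μ : Measure Ω) [IsProbabilityMeasure μ] (ℱ : Filtration ℕ m)
    (X : ℕ → Ω → ℝ) (hX : Adapted ℱ X)
    (hbdd : ∀ t : ℕ, 1 ≤ t → ∀ᵐ ω ∂μ, |X t ω| ≤ 1 / 2)
    (l : ℝ) (hl : l ∈ Ico (0:ℝ) 1) :
    Supermartingale
      (fun t ω => Real.exp
        (l * ∑ s ∈ Icc 1 t, (X s ω - (μ[X s | ℱ (s - 1)]) ω)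
          - (-Real.log (1 - l) - l) *
              ∑ s ∈ Icc 1 t, (X s ω - sampleMean X (s - 1) ω) ^ 2))
      ℱ μ := by
  obtain ⟨hl0, hl1⟩ := hl
  have hX : StronglyAdapted ℱ X := hX.stronglyAdapted
  set ψ : ℝ := -Real.log (1 - l) - l with hψdef
  have hψ0 : 0 ≤ ψ := by
    have h := Real.log_le_sub_one_of_pos (show (0:ℝ) < 1 - l by linarith)
    rw [hψdef]; linarith
  set f : ℕ → Ω → ℝ := fun t ω => Real.exp
      (l * ∑ s ∈ Icc 1 t, (X s ω - (μ[X s | ℱ (s - 1)]) ω)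
        - ψ * ∑ s ∈ Icc 1 t, (X s ω - sampleMean X (s - 1) ω) ^ 2) with hfdef
  -- measurability of sample means
  have hsm : ∀ t : ℕ, StronglyMeasurable[ℱ t] (sampleMean X t) := by
    intro t
    rcases Nat.eq_zero_or_pos t with rfl | ht
    · have h0 : sampleMean X 0 = fun _ => (0:ℝ) := by
        funext ω; simp [sampleMean]
      rw [h0]; exact stronglyMeasurable_const
    · have h0 : sampleMean X t = fun ω => (t : ℝ)⁻¹ * ∑ s ∈ Finset.Icc 1 t, X s ω := by
        funext ω; simp [sampleMean, Nat.pos_iff_ne_zero.1 ht]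
      rw [h0]
      apply StronglyMeasurable.const_mul
      apply Finset.stronglyMeasurable_fun_sum
      intro s hs
      exact (hX s).mono (ℱ.mono (Finset.mem_Icc.1 hs).2)
  -- adaptedness
  have hadp : StronglyAdapted ℱ f := by
    intro t
    apply (Real.continuous_exp.comp_stronglyMeasurable ·)
    apply StronglyMeasurable.sub
    · apply StronglyMeasurable.const_mul
      apply Finset.stronglyMeasurable_fun_sum
      intro s hs
      obtain ⟨hs1, hs2⟩ := Finset.mem_Icc.1 hs
      exact ((hX s).mono (ℱ.mono hs2)).sub
        (stronglyMeasurable_condExp.mono (ℱ.mono (le_trans (Nat.sub_le s 1) hs2)))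
    · apply StronglyMeasurable.const_mul
      apply Finset.stronglyMeasurable_fun_sum
      intro s hs
      obtain ⟨hs1, hs2⟩ := Finset.mem_Icc.1 hs
      exact (((hX s).mono (ℱ.mono hs2)).sub
        ((hsm (s-1)).mono (ℱ.mono (le_trans (Nat.sub_le s 1) hs2)))).pow 2
  -- a.e. bound on conditional means
  have hmbdd : ∀ s : ℕ, 1 ≤ s → ∀ᵐ ω ∂μ, abs ((μ[X s | ℱ (s-1)]) ω) ≤ 1/2 := by
    intro s hs
    have h := ae_bdd_condExp_of_ae_bdd (m := ℱ (s-1)) (μ := μ) (R := (1/2 : NNReal))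
      (by filter_upwards [hbdd s hs] with ω hω using by push_cast; exact hω)
    filter_upwards [h] with ω hω using by push_cast at hω; exact hω
  -- a.e. bound on sample means
  have habdd : ∀ t : ℕ, ∀ᵐ ω ∂μ, |sampleMean X t ω| ≤ 1/2 := by
    intro t
    rcases Nat.eq_zero_or_pos t with rfl | ht
    · simp [sampleMean]
    · have hae : ∀ᵐ ω ∂μ, ∀ s ∈ Finset.Icc 1 t, |X s ω| ≤ 1/2 :=
        (Filter.eventually_all_finset _).2 fun s hs => hbdd s (Finset.mem_Icc.1 hs).1
      filter_upwards [hae] with ω hω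
      have htne : (t : ℝ) ≠ 0 := Nat.cast_ne_zero.2 (Nat.pos_iff_ne_zero.1 ht)
      have htpos : (0:ℝ) < t := Nat.cast_pos.2 ht
      rw [sampleMean, if_neg (Nat.pos_iff_ne_zero.1 ht), abs_mul,
        abs_of_nonneg (inv_nonneg.2 htpos.le)]
      have hsum : |∑ s ∈ Icc 1 t, X s ω| ≤ (t : ℝ) * (1/2) := by
        calc |∑ s ∈ Icc 1 t, X s ω| ≤ ∑ s ∈ Icc 1 t, |X s ω| :=
              Finset.abs_sum_le_sum_abs _ _
          _ ≤ ∑ s ∈ Icc 1 t, (1/2 : ℝ) := Finset.sum_le_sum hω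
          _ = (t : ℝ) * (1/2) := by
              rw [Finset.sum_const, Nat.card_Icc]
              simp [nsmul_eq_mul]
      calc (t:ℝ)⁻¹ * |∑ s ∈ Icc 1 t, X s ω| ≤ (t:ℝ)⁻¹ * ((t:ℝ) * (1/2)) :=
            mul_le_mul_of_nonneg_left hsum (inv_nonneg.2 htpos.le)
        _ = 1/2 := by field_simp
  -- a.e. bound on f t
  have hfbdd : ∀ t : ℕ, ∀ᵐ ω ∂μ, ‖f t ω‖ ≤ Real.exp (l * t) := by
    intro t
    have hae : ∀ᵐ ω ∂μ, ∀ s ∈ Finset.Icc 1 t, |X s ω| ≤ 1/2 ∧ abs ((μ[X s | ℱ (s-1)]) ω) ≤ 1/2 :=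
      (Filter.eventually_all_finset _).2 fun s hs =>
        ((hbdd s (Finset.mem_Icc.1 hs).1).and (hmbdd s (Finset.mem_Icc.1 hs).1))
    filter_upwards [hae] with ω hω
    rw [hfdef]
    rw [Real.norm_eq_abs, abs_of_pos (Real.exp_pos _), Real.exp_le_exp]
    have h1 : ∑ s ∈ Icc 1 t, (X s ω - (μ[X s | ℱ (s-1)]) ω) ≤ (t : ℝ) := by
      calc ∑ s ∈ Icc 1 t, (X s ω - (μ[X s | ℱ (s-1)]) ω) ≤ ∑ s ∈ Icc 1 t, (1:ℝ) := by
            apply Finset.sum_le_sum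
            intro s hs
            obtain ⟨h1, h2⟩ := hω s hs
            have := abs_le.1 h1
            have := abs_le.1 h2
            linarith [this.1, this.2]
        _ = (t : ℝ) := by rw [Finset.sum_const, Nat.card_Icc]; simp
    have h2 : 0 ≤ ψ * ∑ s ∈ Icc 1 t, (X s ω - sampleMean X (s-1) ω)^2 := by
      apply mul_nonneg hψ0
      apply Finset.sum_nonneg
      intro s _
      positivity
    have := mul_le_mul_of_nonneg_left h1 hl0
    linarith
  -- integrability
  have hint : ∀ t : ℕ, Integrable (f t) μ := by
    intro t
    exact (integrable_const (Real.exp (l * t))).mono'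
      (((hadp t).mono (ℱ.le t)).aestronglyMeasurable) (hfbdd t)
  -- integrability of X
  have hXint : ∀ s : ℕ, 1 ≤ s → Integrable (X s) μ := by
    intro s hs
    exact (integrable_const (1/2 : ℝ)).mono' ((hX s).mono (ℱ.le s)).aestronglyMeasurable
      (by filter_upwards [hbdd s hs] with ω hω using by rwa [Real.norm_eq_abs])
  refine supermartingale_nat hadp hint ?_
  intro t
  have ht1 : 1 ≤ t + 1 := by omega
  set a : Ω → ℝ := sampleMean X t with hadef
  set mt : Ω → ℝ := μ[X (t+1) | ℱ t] with hmtdef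
  set K : Ω → ℝ := fun ω => Real.exp (l * (X (t+1) ω - a ω) - ψ * (X (t+1) ω - a ω)^2)
    with hKdef
  set G : Ω → ℝ := fun ω => f t ω * Real.exp (l * (a ω - mt ω)) with hGdef
  -- bounds specialized
  have hm' : ∀ᵐ ω ∂μ, abs (mt ω) ≤ 1/2 := by
    have := hmbdd (t+1) ht1
    simpa only [Nat.add_sub_cancel] using this
  have ha' : ∀ᵐ ω ∂μ, |a ω| ≤ 1/2 := habdd t
  have hx' : ∀ᵐ ω ∂μ, |X (t+1) ω| ≤ 1/2 := hbdd (t+1) ht1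
  -- split
  have hsplit : f (t+1) = G * K := by
    funext ω
    show f (t+1) ω = G ω * K ω
    rw [hGdef, hKdef, hfdef]
    simp only [← Real.exp_add, mul_assoc]
    congr 1
    rw [Finset.sum_Icc_succ_top (Nat.le_add_left 1 t), Finset.sum_Icc_succ_top (Nat.le_add_left 1 t)]
    simp only [Nat.add_sub_cancel, ← hadef, ← hmtdef]
    ring
  -- measurability of G
  have hGsm : StronglyMeasurable[ℱ t] G :=
    (hadp t).mul (Real.continuous_exp.comp_stronglyMeasurable
      (((hsm t).sub stronglyMeasurable_condExp).const_mul l))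
  -- measurability of K
  have hKsm : AEStronglyMeasurable K μ := by
    have h1 : StronglyMeasurable (X (t+1)) := (hX (t+1)).mono (ℱ.le (t+1))
    have h2 : StronglyMeasurable a := (hsm t).mono (ℱ.le t)
    exact (Real.continuous_exp.comp_stronglyMeasurable
      (((h1.sub h2).const_mul l).sub (((h1.sub h2).pow 2).const_mul ψ))).aestronglyMeasurable
  -- bounds
  have hKbdd : ∀ᵐ ω ∂μ, ‖K ω‖ ≤ Real.exp l := by
    filter_upwards [hx', ha'] with ω h1 h2
    rw [hKdef, Real.norm_eq_abs, abs_of_pos (Real.exp_pos _), Real.exp_le_exp]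
    obtain ⟨h1a, h1b⟩ := abs_le.1 h1
    obtain ⟨h2a, h2b⟩ := abs_le.1 h2
    nlinarith [sq_nonneg (X (t+1) ω - a ω), mul_nonneg hψ0 (sq_nonneg (X (t+1) ω - a ω))]
  have hKint : Integrable K μ :=
    (integrable_const (Real.exp l)).mono' hKsm hKbdd
  have hGKint : Integrable (G * K) μ := by
    rw [← hsplit]
    exact hint (t+1)
  -- step 1: pull out G
  have h1 : μ[f (t+1)|ℱ t] =ᵐ[μ] G * μ[K|ℱ t] := by
    rw [hsplit]
    exact condExp_mul_of_stronglyMeasurable_left hGsm hGKint hKint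
  -- the comparison function B
  have haint : Integrable a μ :=
    (integrable_const (1/2 : ℝ)).mono' ((hsm t).mono (ℱ.le t)).aestronglyMeasurable
      (by filter_upwards [ha'] with ω hω using by rwa [Real.norm_eq_abs])
  have hBint : Integrable (fun ω => 1 + l * (X (t+1) ω - a ω)) μ := by
    exact (integrable_const (1:ℝ)).add (((hXint (t+1) ht1).sub haint).const_mul l)
  have hB : μ[K|ℱ t] ≤ᵐ[μ] μ[(fun ω => 1 + l * (X (t+1) ω - a ω))|ℱ t] := by
    apply condExp_mono hKint hBint
    filter_upwards [hx', ha'] with ω h1 h2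
    have hy : -1 ≤ X (t+1) ω - a ω := by
      obtain ⟨h1a, _⟩ := abs_le.1 h1
      obtain ⟨_, h2b⟩ := abs_le.1 h2
      linarith
    have := fgl_ineq hl0 hl1 hy
    rw [hKdef, hψdef]
    exact this
  -- compute the conditional expectation of B
  have hB1int : Integrable (fun ω => 1 - l * a ω) μ :=
    (integrable_const (1:ℝ)).sub (haint.const_mul l)
  have hB2int : Integrable (fun ω => l * X (t+1) ω) μ := (hXint (t+1) ht1).const_mul l
  have hBeq : μ[(fun ω => 1 + l * (X (t+1) ω - a ω))|ℱ t]
      =ᵐ[μ] fun ω => (1 - l * a ω) + l * mt ω := by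
    have hdecomp : (fun ω => 1 + l * (X (t+1) ω - a ω))
        = (fun ω => 1 - l * a ω) + fun ω => l * X (t+1) ω := by
      funext ω; simp only [Pi.add_apply]; ring
    rw [hdecomp]
    refine (condExp_add hB1int hB2int (ℱ t)).trans ?_
    have e1 : μ[(fun ω => 1 - l * a ω)|ℱ t] = fun ω => 1 - l * a ω :=
      condExp_of_stronglyMeasurable (ℱ.le t)
        (stronglyMeasurable_const.sub ((hsm t).const_mul l)) hB1int
    have e2 : μ[(fun ω => l * X (t+1) ω)|ℱ t] =ᵐ[μ] fun ω => l * mt ω := by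
      have : (fun ω => l * X (t+1) ω) = l • (X (t+1)) := by
        funext ω; simp [smul_eq_mul]
      rw [this]
      refine (condExp_smul l (X (t+1)) (ℱ t)).trans ?_
      rw [hmtdef]
      filter_upwards with ω
      simp [smul_eq_mul]
    filter_upwards [e2] with ω h2
    simp only [Pi.add_apply, e1, h2]
  -- final pointwise computation
  have hfinal : G * μ[K|ℱ t] ≤ᵐ[μ] f t := by
    filter_upwards [hB, hBeq] with ω hb hbe
    simp only [Pi.mul_apply]
    have hG0 : 0 ≤ G ω := by
      rw [hGdef, hfdef]
      positivity
    have hcb : (μ[K|ℱ t]) ω ≤ 1 + l * (mt ω - a ω) := by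
      rw [hbe] at hb
      calc (μ[K|ℱ t]) ω ≤ (1 - l * a ω) + l * mt ω := hb
        _ = 1 + l * (mt ω - a ω) := by ring
    have step1 : G ω * (μ[K|ℱ t]) ω ≤ G ω * Real.exp (l * (mt ω - a ω)) := by
      apply mul_le_mul_of_nonneg_left _ hG0
      refine hcb.trans ?_
      have := Real.add_one_le_exp (l * (mt ω - a ω))
      linarith
    refine step1.trans ?_
    rw [hGdef]
    rw [mul_assoc, ← Real.exp_add]
    have : l * (a ω - mt ω) + l * (mt ω - a ω) = 0 := by ring
    rw [this, Real.exp_zero, mul_one]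
  exact h1.le.trans hfinal
end
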